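/- arXiv:2107.14031 — 5 statements merged into one kernel-verified Lean document; each statement's English description precedes it below -/
import Mathlib

section
/- Given data of an adjunction in the 2-category of doctrines (P, Q, L, λ, R, ρ, η, ε), define for each object X of C the map ◻_X : Q(L X) → Q(L X) by ◻_X γ = λ_X(P(η_X)(ρ_{L X}(γ))). Then ◻ is an interior operator on the doctrine L.op ⋙ Q : Cᵒᵖ ⥤ PartOrd; that is: (a) naturality: for every arrow f : X' ⟶ X in C and γ ∈ Q(L X), Q(L f)(◻_X γ) = ◻_{X'}(Q(L f)(γ)); (b) ◻_X γ ≤ γ for all γ ∈ Q(L X); and (c) ◻_X γ ≤ ◻_X(◻_X γ) for all γ ∈ Q(L X). -/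
open CategoryTheory Opposite

/-- Apply a morphism of `PartOrd` to an element (morphisms of `PartOrd` are order homs). -/
def ap {X Y : PartOrd} (f : X ⟶ Y) : X →o Y := f.hom

/-- Given an adjunction in the 2-category of doctrines, the operator
`◻_X γ = λ_X (P(η_X) (ρ_{L X} γ))` is an interior operator on the doctrine `L.op ⋙ Q`:
it is natural, deflationary and idempotent-increasing. -/
theorem adjunction_of_doctrines_gives_interior_operator
    {C D : Type*} [Category C] [Category D]
    (P : Cᵒᵖ ⥤ PartOrd) (Q : Dᵒᵖ ⥤ PartOrd)
    (L : C ⥤ D) (R : D ⥤ C) (adj : L ⊣ R)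
    (lam : P ⟶ L.op ⋙ Q) (rho : Q ⟶ R.op ⋙ P)
    (hUnit : ∀ (X : C) (α : P.obj (op X)),
      α ≤ ap (P.map (adj.unit.app X).op)
            (ap (rho.app (op (L.obj X))) (ap (lam.app (op X)) α)))
    (hCounit : ∀ (Y : D) (β : Q.obj (op Y)),
      ap (lam.app (op (R.obj Y))) (ap (rho.app (op Y)) β) ≤ ap (Q.map (adj.counit.app Y).op) β)
    (box : ∀ (X : C), Q.obj (op (L.obj X)) → Q.obj (op (L.obj X)))
    (hbox : ∀ (X : C) (γ : Q.obj (op (L.obj X))),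
      box X γ = ap (lam.app (op X)) (ap (P.map (adj.unit.app X).op)
                  (ap (rho.app (op (L.obj X))) γ))) :
    (∀ {X' X : C} (f : X' ⟶ X) (γ : Q.obj (op (L.obj X))),
        ap (Q.map (L.map f).op) (box X γ) = box X' (ap (Q.map (L.map f).op) γ)) ∧
    (∀ (X : C) (γ : Q.obj (op (L.obj X))), box X γ ≤ γ) ∧
    (∀ (X : C) (γ : Q.obj (op (L.obj X))), box X γ ≤ box X (box X γ)) := by
  refine ⟨?_, ?_, ?_⟩
  · intro X' X f γ
    have h1 : ∀ x, ap (Q.map (L.map f).op) (ap (lam.app (op X)) x)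
        = ap (lam.app (op X')) (ap (P.map f.op) x) := fun x =>
      (congrArg (fun g => ap g x) (lam.naturality f.op)).symm
    have h2 : ∀ y, ap (P.map (R.map (L.map f)).op) (ap (rho.app (op (L.obj X))) y)
        = ap (rho.app (op (L.obj X'))) (ap (Q.map (L.map f).op) y) := fun y =>
      (congrArg (fun g => ap g y) (rho.naturality (L.map f).op)).symm
    have hη : (adj.unit.app X).op ≫ f.op = (R.map (L.map f)).op ≫ (adj.unit.app X').op := by
      rw [← op_comp, ← op_comp]
      exact congrArg Quiver.Hom.op (by simpa using adj.unit.naturality f)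
    have h3 : ∀ z, ap (P.map f.op) (ap (P.map (adj.unit.app X).op) z)
        = ap (P.map (adj.unit.app X').op) (ap (P.map (R.map (L.map f)).op) z) := by
      intro z
      have := congrArg (fun g => ap (P.map g) z) hη
      simp only [P.map_comp] at this
      exact this
    simp only [hbox]
    rw [h1, h3, h2]
  · intro X γ
    rw [hbox]
    have h1 : ap (lam.app (op X)) (ap (P.map (adj.unit.app X).op)
          (ap (rho.app (op (L.obj X))) γ))
        = ap (Q.map (L.map (adj.unit.app X)).op)
            (ap (lam.app (op (R.obj (L.obj X)))) (ap (rho.app (op (L.obj X))) γ)) :=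
      congrArg (fun g => ap g (ap (rho.app (op (L.obj X))) γ))
        (lam.naturality (adj.unit.app X).op)
    rw [h1]
    have h2 := (ap (Q.map (L.map (adj.unit.app X)).op)).monotone (hCounit (L.obj X) γ)
    refine h2.trans ?_
    have h3 : ap (Q.map (L.map (adj.unit.app X)).op)
        (ap (Q.map (adj.counit.app (L.obj X)).op) γ) = γ := by
      have : (adj.counit.app (L.obj X)).op ≫ (L.map (adj.unit.app X)).op
          = 𝟙 (op (L.obj X)) := by
        rw [← op_comp, adj.left_triangle_components X]; rfl
      have := congrArg (fun g => ap (Q.map g) γ) this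
      simp only [Q.map_comp, Q.map_id] at this
      exact this
    exact le_of_eq h3
  · intro X γ
    have h := hUnit X (ap (P.map (adj.unit.app X).op) (ap (rho.app (op (L.obj X))) γ))
    have h' := (ap (lam.app (op X))).monotone h
    simp only [hbox]
    exact h'
end

section
/- Let (K, ν, μ, κ) be a comonad on a doctrine P : Cᵒᵖ ⥤ PartOrd. Then for every coalgebra (A, a : A ⟶ K A) of K, the map ◻_{(A,a)} : P(A) → P(A) defined by ◻_{(A,a)} α = P(a)(κ_A α) satisfies: (a) ◻_{(A,a)} α ≤ α for all α ∈ P(A); (b) ◻_{(A,a)} α ≤ ◻_{(A,a)}(◻_{(A,a)} α) for all α ∈ P(A); and (c) naturality over the category of coalgebras: for every coalgebra morphism f : (A,a) ⟶ (B,b) and every β ∈ P(B), P(f)(◻_{(B,b)} β) = ◻_{(A,a)}(P(f)(β)). -/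
open CategoryTheory Opposite

lemma ap_comp {X Y Z : PartOrd} (f : X ⟶ Y) (g : Y ⟶ Z) (x : X) :
    ap (f ≫ g) x = ap g (ap f x) := rfl

lemma ap_id {X : PartOrd} (x : X) : ap (𝟙 X) x = x := rfl

lemma ap_map_comp {C : Type*} [Category C] (P : Cᵒᵖ ⥤ PartOrd) {X Y Z : C}
    (g : X ⟶ Y) (h : Y ⟶ Z) (x : P.obj (op Z)) :
    ap (P.map g.op) (ap (P.map h.op) x) = ap (P.map (g ≫ h).op) x := by
  rw [op_comp, P.map_comp]; rfl

lemma ap_map_id {C : Type*} [Category C] (P : Cᵒᵖ ⥤ PartOrd) {X : C} (x : P.obj (op X)) :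
    ap (P.map (𝟙 X).op) x = x := by
  rw [op_id, P.map_id]; rfl

/-- Given a comonad `(K, ν, μ, κ)` on a doctrine `P`, for every coalgebra `(A, a)` the
operator `α ↦ P(a)(κ_A α)` is deflationary, below its square, and natural with respect to
coalgebra morphisms: it is an interior operator on the doctrine over the Eilenberg-Moore
category of coalgebras. -/
theorem comonad_on_doctrine_gives_interior_operator_on_coalgebras
    {C : Type*} [Category C] (P : Cᵒᵖ ⥤ PartOrd) (K : Comonad C)
    (kap : P ⟶ (K : C ⥤ C).op ⋙ P)
    (hcounit : ∀ (X : C) (α : P.obj (op X)),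
      ap (kap.app (op X)) α ≤ ap (P.map (K.ε.app X).op) α)
    (hcomult : ∀ (X : C) (α : P.obj (op X)),
      ap (kap.app (op X)) α ≤
        ap (P.map (K.δ.app X).op)
          (ap (kap.app (op ((K : C ⥤ C).obj X))) (ap (kap.app (op X)) α)))
    (box : ∀ (A : K.Coalgebra), P.obj (op A.A) → P.obj (op A.A))
    (hbox : ∀ (A : K.Coalgebra) (α : P.obj (op A.A)),
      box A α = ap (P.map A.a.op) (ap (kap.app (op A.A)) α)) :
    (∀ (A : K.Coalgebra) (α : P.obj (op A.A)), box A α ≤ α) ∧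
    (∀ (A : K.Coalgebra) (α : P.obj (op A.A)), box A α ≤ box A (box A α)) ∧
    (∀ (A B : K.Coalgebra) (f : A ⟶ B) (β : P.obj (op B.A)),
      ap (P.map f.f.op) (box B β) = box A (ap (P.map f.f.op) β)) := by
  refine ⟨?_, ?_, ?_⟩
  · intro A α
    rw [hbox]
    refine le_trans ((ap (P.map A.a.op)).monotone (hcounit A.A α)) (le_of_eq ?_)
    rw [ap_map_comp, A.counit]
    exact ap_map_id P α
  · intro A α
    simp only [hbox]
    refine le_trans ((ap (P.map A.a.op)).monotone (hcomult A.A α)) (le_of_eq ?_)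
    have hn := congrArg (fun g => ap g (ap (kap.app (op A.A)) α)) (kap.naturality A.a.op)
    simp only [ap_comp, Functor.comp_map, Functor.op_map, Quiver.Hom.unop_op] at hn
    refine Eq.trans ?_ (congrArg (fun x => ap (P.map A.a.op) x) hn).symm
    refine Eq.trans (ap_map_comp P A.a (K.δ.app A.A) _) ?_
    refine Eq.trans ?_ (ap_map_comp P A.a ((K : C ⥤ C).map A.a) _).symm
    exact congrArg (fun g => ap (P.map (Quiver.Hom.op g)) _) A.coassoc
  · intro A B f β
    rw [hbox, hbox]
    have hn := congrArg (fun g => ap (P.map A.a.op) (ap g β)) (kap.naturality f.f.op)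
    simp only [ap_comp, Functor.comp_map, Functor.op_map, Quiver.Hom.unop_op] at hn
    refine Eq.trans ?_ hn.symm
    refine Eq.trans (ap_map_comp P f.f B.a _) ?_
    refine Eq.trans ?_ (ap_map_comp P A.a ((K : C ⥤ C).map f.f) _).symm
    exact congrArg (fun g => ap (P.map (Quiver.Hom.op g)) _) f.h.symm
end

section
/- Let (K, ν, μ, κ) be a comonad on a doctrine P : Cᵒᵖ ⥤ PartOrd and let (A, a : A ⟶ K A) be a coalgebra for K. Then the operator α ↦ P(a)(κ_A α) on P(A) is idempotent: for every α ∈ P(A), P(a)(κ_A(P(a)(κ_A α))) = P(a)(κ_A α). Consequently, α ≤ P(a)(κ_A α) holds if and only if P(a)(κ_A α) = α, i.e. the elements below their image are exactly the fixed points of the operator. -/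
open CategoryTheory Opposite

/-- Given a comonad `(K, ν, μ, κ)` on a doctrine `P` and a coalgebra `(A, a)`, the operator
`α ↦ P(a)(κ_A α)` on the fibre `P(A)` is idempotent; consequently `α ≤ P(a)(κ_A α)` holds
iff `α` is a fixed point of the operator. -/
theorem comonad_on_doctrine_operator_idempotent
    {C : Type*} [Category C] (P : Cᵒᵖ ⥤ PartOrd) (K : Comonad C)
    (kap : P ⟶ (K : C ⥤ C).op ⋙ P)
    (hcounit : ∀ (X : C) (α : P.obj (op X)),
      ap (kap.app (op X)) α ≤ ap (P.map (K.ε.app X).op) α)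
    (hcomult : ∀ (X : C) (α : P.obj (op X)),
      ap (kap.app (op X)) α ≤
        ap (P.map (K.δ.app X).op)
          (ap (kap.app (op ((K : C ⥤ C).obj X))) (ap (kap.app (op X)) α)))
    (A : K.Coalgebra) :
    ∀ (α : P.obj (op A.A)),
      ap (P.map A.a.op) (ap (kap.app (op A.A))
          (ap (P.map A.a.op) (ap (kap.app (op A.A)) α)))
        = ap (P.map A.a.op) (ap (kap.app (op A.A)) α) ∧
      (α ≤ ap (P.map A.a.op) (ap (kap.app (op A.A)) α) ↔
        ap (P.map A.a.op) (ap (kap.app (op A.A)) α) = α) := by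
  -- notation
  set T : P.obj (op A.A) →o P.obj (op A.A) :=
    (ap (P.map A.a.op)).comp (ap (kap.app (op A.A))) with hT
  have hTdef : ∀ α, T α = ap (P.map A.a.op) (ap (kap.app (op A.A)) α) := fun _ => rfl
  -- deflationary
  have defl : ∀ α, T α ≤ α := by
    intro α
    have h1 := (ap (P.map A.a.op)).monotone (hcounit A.A α)
    have h2 : ap (P.map A.a.op) (ap (P.map (K.ε.app A.A).op) α) = α := by
      have e : ap (P.map (K.ε.app A.A).op ≫ P.map A.a.op) α
          = ap (P.map ((A.a ≫ K.ε.app A.A).op)) α := by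
        rw [op_comp, P.map_comp]
      rw [show ap (P.map A.a.op) (ap (P.map (K.ε.app A.A).op) α)
          = ap (P.map (K.ε.app A.A).op ≫ P.map A.a.op) α from rfl, e, A.counit]
      simp [ap]
    exact h1.trans_eq h2
  -- T α ≤ T (T α)
  have infl : ∀ α, T α ≤ T (T α) := by
    intro α
    have hnat : ap (kap.app (op A.A)) (ap (P.map A.a.op) (ap (kap.app (op A.A)) α))
        = ap (P.map ((K : C ⥤ C).map A.a).op)
            (ap (kap.app (op ((K : C ⥤ C).obj A.A))) (ap (kap.app (op A.A)) α)) := by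
      have := kap.naturality A.a.op
      calc ap (kap.app (op A.A)) (ap (P.map A.a.op) (ap (kap.app (op A.A)) α))
          = ap (P.map A.a.op ≫ kap.app (op A.A)) (ap (kap.app (op A.A)) α) := rfl
        _ = ap (kap.app (op ((K : C ⥤ C).obj A.A)) ≫ ((K : C ⥤ C).op ⋙ P).map A.a.op)
              (ap (kap.app (op A.A)) α) := by rw [this]
        _ = _ := rfl
    have key : ∀ β, ap (P.map A.a.op) (ap (P.map ((K : C ⥤ C).map A.a).op) β)
        = ap (P.map A.a.op) (ap (P.map (K.δ.app A.A).op) β) := by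
      intro β
      have : P.map ((K : C ⥤ C).map A.a).op ≫ P.map A.a.op
          = P.map (K.δ.app A.A).op ≫ P.map A.a.op := by
        rw [← P.map_comp, ← P.map_comp, ← op_comp, ← op_comp, ← A.coassoc]
      calc ap (P.map A.a.op) (ap (P.map ((K : C ⥤ C).map A.a).op) β)
          = ap (P.map ((K : C ⥤ C).map A.a).op ≫ P.map A.a.op) β := rfl
        _ = ap (P.map (K.δ.app A.A).op ≫ P.map A.a.op) β := by
              exact DFunLike.congr_fun (congrArg ap this) β
        _ = _ := rfl
    have h1 := (ap (P.map A.a.op)).monotone (hcomult A.A α)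
    calc T α ≤ ap (P.map A.a.op) (ap (P.map (K.δ.app A.A).op)
          (ap (kap.app (op ((K : C ⥤ C).obj A.A))) (ap (kap.app (op A.A)) α))) := h1
      _ = ap (P.map A.a.op) (ap (P.map ((K : C ⥤ C).map A.a).op)
          (ap (kap.app (op ((K : C ⥤ C).obj A.A))) (ap (kap.app (op A.A)) α))) :=
            (key _).symm
      _ = T (T α) := by rw [hTdef, hTdef, hnat]
  intro α
  refine ⟨le_antisymm (defl _) (infl α), ?_, fun h => h.ge⟩
  intro h
  exact le_antisymm (defl α) h
end

section
/- Let Q be a commutative unital quantale, R_Q = {x : Q | x ≤ 1 ∧ x ≤ x * x}, and define r : Q → Q by r x = sSup {y | y ∈ R_Q ∧ y ≤ x}. Then: (a) r x ∈ R_Q for every x; and (b) r is right adjoint to the inclusion of R_Q into Q, i.e. for every y ∈ R_Q and every x : Q, y ≤ r x if and only if y ≤ x. -/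
/-- In a commutative unital quantale `Q`, the map `r x = sSup {y | y ∈ R_Q ∧ y ≤ x}` lands in
`R_Q` and is right adjoint to the inclusion of `R_Q` into `Q`. -/
theorem quantale_r_right_adjoint_to_inclusion
    {Q : Type*} [CommMonoid Q] [CompleteLattice Q] [IsQuantale Q]
    (r : Q → Q)
    (hr : ∀ x : Q, r x = sSup {y : Q | y ∈ {z : Q | z ≤ 1 ∧ z ≤ z * z} ∧ y ≤ x}) :
    (∀ x : Q, r x ∈ {z : Q | z ≤ 1 ∧ z ≤ z * z}) ∧
    (∀ y : Q, y ∈ {z : Q | z ≤ 1 ∧ z ≤ z * z} → ∀ x : Q, (y ≤ r x ↔ y ≤ x)) := by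
  have hmem : ∀ x : Q, r x ∈ {z : Q | z ≤ 1 ∧ z ≤ z * z} := by
    intro x
    rw [hr x]
    constructor
    · exact sSup_le fun y hy => hy.1.1
    · apply sSup_le
      rintro y ⟨⟨hy1, hy2⟩, hyx⟩
      have hmemS : y ∈ {y : Q | y ∈ {z : Q | z ≤ 1 ∧ z ≤ z * z} ∧ y ≤ x} := ⟨⟨hy1, hy2⟩, hyx⟩
      calc y ≤ y * y := hy2
        _ ≤ _ := mul_le_mul' (le_sSup hmemS) (le_sSup hmemS)
  refine ⟨hmem, fun y hy x => ⟨fun h => ?_, fun h => ?_⟩⟩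
  · calc y ≤ r x := h
      _ ≤ x := by rw [hr x]; exact sSup_le fun z hz => hz.2
  · rw [hr x]; exact le_sSup ⟨hy, h⟩
end

section
/- Let Q be a commutative unital quantale and define the linear exponential modality ! : Q → Q by !x = sSup {y | (y ≤ 1 ∧ y ≤ y * y) ∧ y ≤ x}. Then for all x, y : Q: (a) !x ≤ x; (b) !(!x) = !x (in particular !x ≤ !(!x)); (c) ! is monotone; (d) !x ≤ 1; (e) !x ≤ !x * !x; (f) 1 ≤ !1; and (g) !x * !y ≤ !(x * y). -/
/-- In a commutative unital quantale `Q`, the linear exponential modality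
`!x = sSup {y | (y ≤ 1 ∧ y ≤ y * y) ∧ y ≤ x}` is a monotone interior operator that is
idempotent and satisfies the characteristic "bang" laws. -/
theorem quantale_bang_modality
    {Q : Type*} [CommMonoid Q] [CompleteLattice Q] [IsQuantale Q]
    (bang : Q → Q)
    (hbang : ∀ x : Q, bang x = sSup {y : Q | (y ≤ 1 ∧ y ≤ y * y) ∧ y ≤ x}) :
    (∀ x : Q, bang x ≤ x) ∧
    (∀ x : Q, bang (bang x) = bang x) ∧
    Monotone bang ∧
    (∀ x : Q, bang x ≤ 1) ∧
    (∀ x : Q, bang x ≤ bang x * bang x) ∧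
    ((1 : Q) ≤ bang 1) ∧
    (∀ x y : Q, bang x * bang y ≤ bang (x * y)) := by
  have hle : ∀ x : Q, bang x ≤ x := by
    intro x; rw [hbang]; exact sSup_le fun y hy => hy.2
  have hone : ∀ x : Q, bang x ≤ 1 := by
    intro x; rw [hbang]; exact sSup_le fun y hy => hy.1.1
  have hsq : ∀ x : Q, bang x ≤ bang x * bang x := by
    intro x
    rw [hbang]
    refine sSup_le fun y hy => le_trans hy.1.2 ?_
    exact mul_le_mul' (le_sSup hy) (le_sSup hy)
  have hmem : ∀ x : Q, (bang x ≤ 1 ∧ bang x ≤ bang x * bang x) ∧ bang x ≤ x :=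
    fun x => ⟨⟨hone x, hsq x⟩, hle x⟩
  have hidem : ∀ x : Q, bang (bang x) = bang x := by
    intro x
    refine le_antisymm (hle _) ?_
    rw [hbang (bang x)]
    exact le_sSup ⟨⟨hone x, hsq x⟩, le_rfl⟩
  have hmono : Monotone bang := by
    intro a b hab
    rw [hbang a, hbang b]
    exact sSup_le fun y hy => le_sSup ⟨hy.1, hy.2.trans hab⟩
  refine ⟨hle, hidem, hmono, hone, hsq, ?_, ?_⟩
  · rw [hbang]
    exact le_sSup ⟨⟨le_rfl, (one_mul (1:Q)).ge⟩, le_rfl⟩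
  · intro x y
    rw [hbang (x * y)]
    refine le_sSup ⟨⟨?_, ?_⟩, mul_le_mul' (hle x) (hle y)⟩
    · calc bang x * bang y ≤ 1 * 1 := mul_le_mul' (hone x) (hone y)
        _ = 1 := one_mul 1
    · calc bang x * bang y ≤ (bang x * bang x) * (bang y * bang y) :=
            mul_le_mul' (hsq x) (hsq y)
        _ = (bang x * bang y) * (bang x * bang y) := by
            rw [mul_mul_mul_comm]
end
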